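/- Let A = C([−1,1], ℂ) and let E : A → A be defined by (E f)(x) = (f(x) + f(−x))/2. Then E admits no finite quasi-basis: there do not exist n ∈ ℕ and elements u₁, …, u_n ∈ A such that f = Σ_{i=1}^{n} u_i · E(u_i* · f) for every f ∈ A. In particular, E is not of algebraically finite (Watatani) index. -/

import Mathlib

open scoped ComplexOrder

noncomputable section

/-- `-x ∈ [-1,1]` for `x ∈ [-1,1]`. -/
lemma neg_mem_Icc (x : Set.Icc (-1 : ℝ) 1) : -(x : ℝ) ∈ Set.Icc (-1 : ℝ) 1 :=
  ⟨by linarith [x.2.2], by linarith [x.2.1]⟩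

/-- The reflection `x ↦ -x` on the interval `[-1, 1]`. -/
def negIcc : C(Set.Icc (-1 : ℝ) 1, Set.Icc (-1 : ℝ) 1) :=
  ⟨fun x => ⟨-(x : ℝ), neg_mem_Icc x⟩,
    (continuous_neg.comp continuous_subtype_val).subtype_mk fun x => neg_mem_Icc x⟩

/-- The conditional expectation `(E f)(x) = (f(x) + f(-x))/2` on `C([-1,1], ℂ)`. -/
def Esym : C(Set.Icc (-1 : ℝ) 1, ℂ) → C(Set.Icc (-1 : ℝ) 1, ℂ) :=
  fun f => (2⁻¹ : ℂ) • (f + f.comp negIcc)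

theorem Esym_no_finite_quasi_basis :
    ¬ ∃ (n : ℕ) (u : Fin n → C(Set.Icc (-1 : ℝ) 1, ℂ)),
        ∀ f : C(Set.Icc (-1 : ℝ) 1, ℂ),
          f = ∑ i, u i * Esym (star (u i) * f) := by
  rintro ⟨n, u, hu⟩
  have key : ∀ (f : C(Set.Icc (-1 : ℝ) 1, ℂ)) (x : Set.Icc (-1 : ℝ) 1),
      f x = ∑ i, u i x * (2⁻¹ * ((starRingEnd ℂ) (u i x) * f x
          + (starRingEnd ℂ) (u i (negIcc x)) * f (negIcc x))) := by
    intro f x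
    have h := DFunLike.congr_fun (hu f) x
    simpa [Esym, ContinuousMap.sum_apply, Complex.star_def, mul_comm] using h
  set S : Set.Icc (-1 : ℝ) 1 → ℝ := fun x => ∑ i, Complex.normSq (u i x) with hS
  have hScont : Continuous S := by
    apply continuous_finset_sum
    intro i _
    exact Complex.continuous_normSq.comp (u i).continuous
  set z0 : Set.Icc (-1 : ℝ) 1 := ⟨0, by norm_num⟩ with hz0
  -- value at 0 is 1
  have hneg0 : negIcc z0 = z0 := by
    apply Subtype.ext
    simp [negIcc, hz0]
  have h0 : S z0 = 1 := by
    have h := key 1 z0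
    rw [hneg0] at h
    simp only [ContinuousMap.one_apply] at h
    have hc : (1 : ℂ) = ∑ i, (Complex.normSq (u i z0) : ℂ) := by
      rw [h]
      refine Finset.sum_congr rfl fun i _ => ?_
      rw [← Complex.mul_conj]
      ring
    have : ((S z0 : ℝ) : ℂ) = ((1 : ℝ) : ℂ) := by
      simp only [hS]
      push_cast
      exact hc.symm
    exact Complex.ofReal_inj.mp this
  -- value away from 0 is 2
  have hx : ∀ x : Set.Icc (-1 : ℝ) 1, (x : ℝ) ≠ 0 → S x = 2 := by
    intro x hxne
    set a : ℂ := ((x : ℝ) : ℂ) with ha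
    have hane : a ≠ 0 := by
      simpa [ha] using Complex.ofReal_ne_zero.mpr hxne
    set f : C(Set.Icc (-1 : ℝ) 1, ℂ) :=
      ⟨fun t => (((t : ℝ) : ℂ) + a) / (2 * a),
        ((Complex.continuous_ofReal.comp continuous_subtype_val).add
          continuous_const).div_const _⟩ with hf
    have hfx : f x = 1 := by
      simp only [hf, ContinuousMap.coe_mk]
      field_simp [ha]
      ring
    have hfnx : f (negIcc x) = 0 := by
      simp only [hf, ContinuousMap.coe_mk, negIcc]
      push_cast
      ring_nf
      rw [← ha]
      ring
    have h := key f x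
    rw [hfx, hfnx] at h
    have hc : (2 : ℂ) = ∑ i, (Complex.normSq (u i x) : ℂ) := by
      calc (2 : ℂ) = 2 * 1 := by ring
        _ = 2 * ∑ i, u i x * (2⁻¹ * ((starRingEnd ℂ) (u i x) * 1
              + (starRingEnd ℂ) (u i (negIcc x)) * 0)) := by rw [← h]
        _ = ∑ i, (Complex.normSq (u i x) : ℂ) := by
              rw [Finset.mul_sum]
              refine Finset.sum_congr rfl fun i _ => ?_
              rw [← Complex.mul_conj]
              ring
    have : ((S x : ℝ) : ℂ) = ((2 : ℝ) : ℂ) := by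
      simp only [hS]
      push_cast
      exact hc.symm
    exact Complex.ofReal_inj.mp this
  -- contradiction by continuity
  set xk : ℕ → Set.Icc (-1 : ℝ) 1 := fun k =>
    ⟨1 / (k + 1), by
      constructor
      · have : (0:ℝ) ≤ 1 / (k + 1) := by positivity
        linarith
      · rw [div_le_one (by positivity)]
        linarith [Nat.cast_nonneg (α := ℝ) k]⟩ with hxk
  have htend : Filter.Tendsto (fun k => ((xk k : ℝ))) Filter.atTop (nhds (0 : ℝ)) := by
    simpa [hxk, one_div] using tendsto_one_div_add_atTop_nhds_zero_nat (𝕜 := ℝ)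
  have htend2 : Filter.Tendsto xk Filter.atTop (nhds z0) := by
    rw [tendsto_subtype_rng]
    simpa [hz0] using htend
  have htendS : Filter.Tendsto (fun k => S (xk k)) Filter.atTop (nhds (S z0)) :=
    (hScont.tendsto z0).comp htend2
  have hconst : ∀ k, S (xk k) = 2 := by
    intro k
    apply hx
    show (1 : ℝ) / (k + 1) ≠ 0
    exact ne_of_gt (by positivity)
  have hlim : Filter.Tendsto (fun _ : ℕ => (2 : ℝ)) Filter.atTop (nhds (S z0)) := by
    simpa [hconst] using htendS
  have h2 : S z0 = 2 := tendsto_nhds_unique hlim tendsto_const_nhds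
  rw [h0] at h2
  norm_num at h2

end
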